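/- Assume S_* ≠ ∅ and let f_* = inf_{x∈C} f(x). Then along Algorithm A2, for every k such that x^k ∉ S_*, one has f(x^k) > f^lev_k ≥ f_*. -/
import Mathlib


open Filter
open scoped RealInnerProductSpace

lemma grad_ineq_aux
    {H : Type*} [NormedAddCommGroup H] [InnerProductSpace ℝ H]
    (f : H → ℝ) (hf : ConvexOn ℝ Set.univ f)
    (gradf : H → H)
    (hgrad : ∀ x d : H,
      Tendsto (fun t : ℝ => (f (x + t • d) - f x) / t) (nhdsWithin 0 (Set.Ioi 0))
        (nhds ⟪gradf x, d⟫))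
    (x w : H) : f x + ⟪gradf x, w - x⟫ ≤ f w := by
  have key : ∀ t ∈ Set.Ioo (0:ℝ) 1, (f (x + t • (w - x)) - f x) / t ≤ f w - f x := by
    intro t ht
    have h1 : x + t • (w - x) = (1 - t) • x + t • w := by module
    have h2 := hf.2 (Set.mem_univ x) (Set.mem_univ w)
      (by linarith [ht.2] : (0:ℝ) ≤ 1 - t) ht.1.le (by ring)
    simp only [smul_eq_mul] at h2
    rw [h1, div_le_iff₀ ht.1]
    nlinarith [h2]
  have hmem : Set.Ioo (0:ℝ) 1 ∈ nhdsWithin (0:ℝ) (Set.Ioi 0) :=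
    Ioo_mem_nhdsGT_of_mem ⟨le_refl 0, one_pos⟩
  have := le_of_tendsto (hgrad x (w - x)) (Filter.eventually_of_mem hmem key)
  linarith

theorem stmt_16
    {H : Type*} [NormedAddCommGroup H] [InnerProductSpace ℝ H] [CompleteSpace H]
    (C : Set H) (hCne : C.Nonempty) (hCcl : IsClosed C) (hCcv : Convex ℝ C)
    (f : H → ℝ) (hf : ConvexOn ℝ Set.univ f)
    (gradf : H → H)
    (hgrad : ∀ x d : H,
      Tendsto (fun t : ℝ => (f (x + t • d) - f x) / t) (nhdsWithin 0 (Set.Ioi 0))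
        (nhds ⟪gradf x, d⟫))
    (PC : H → H)
    (hPC : ∀ x : H, PC x ∈ C ∧ ∀ z ∈ C, ⟪x - PC x, z - PC x⟫ ≤ 0)
    (θ δ βlo βhi : ℝ)
    (hθ : θ ∈ Set.Ioo (0:ℝ) 1) (hδ : δ ∈ Set.Ioo (0:ℝ) 1)
    (hβlo : 0 < βlo) (hββ : βlo ≤ βhi)
    (β : ℕ → ℝ) (hβk : ∀ k, β k ∈ Set.Icc βlo βhi)
    (x z : ℕ → H) (α : ℕ → ℝ) (j : ℕ → ℕ)
    (hx0 : x 0 ∈ C)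
    (hz : ∀ k, z k = x k - β k • gradf (x k))
    (hjA : ∀ k, f ((θ ^ j k) • PC (z k) + (1 - θ ^ j k) • x k)
        ≤ f (x k) - δ * θ ^ j k * ⟪gradf (x k), x k - PC (z k)⟫)
    (hjmin : ∀ k, ∀ i < j k, ¬ (f ((θ ^ i) • PC (z k) + (1 - θ ^ i) • x k)
        ≤ f (x k) - δ * θ ^ i * ⟪gradf (x k), x k - PC (z k)⟫))
    (hα : ∀ k, α k = θ ^ j k)
    (flev : ℕ → ℝ)
    (hflev0 : flev 0 = f ((θ ^ j 0) • PC (z 0) + (1 - θ ^ j 0) • x 0))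
    (hflevS : ∀ k, flev (k+1) =
        min (flev k) (f ((θ ^ j (k+1)) • PC (z (k+1)) + (1 - θ ^ j (k+1)) • x (k+1))))
    (hstep : ∀ k,
      (x (k+1) ∈ C ∧ ⟪x (k+1) - x k, x 0 - x k⟫ ≤ 0 ∧
        ⟪gradf (x k), x (k+1) - x k⟫ + f (x k) - flev k ≤ 0) ∧
      ∀ y : H, y ∈ C → ⟪y - x k, x 0 - x k⟫ ≤ 0 →
        ⟪gradf (x k), y - x k⟫ + f (x k) - flev k ≤ 0 →
        ‖x (k+1) - x 0‖ ≤ ‖y - x 0‖)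
    (hS : ∃ xs ∈ C, ∀ y ∈ C, f xs ≤ f y)
    : ∀ k, ¬ (x k ∈ C ∧ ∀ y ∈ C, f (x k) ≤ f y) →
      flev k < f (x k) ∧ sInf (f '' C) ≤ flev k := by
  obtain ⟨xs, hxsC, hxs⟩ := hS
  -- x k ∈ C
  have hxC : ∀ k, x k ∈ C := by
    intro k
    induction k with
    | zero => exact hx0
    | succ n ih => exact (hstep n).1.1
  -- the test points belong to C
  have hyC : ∀ k, (θ ^ j k) • PC (z k) + (1 - θ ^ j k) • x k ∈ C := by
    intro k
    have hθj0 : (0:ℝ) ≤ θ ^ j k := pow_nonneg hθ.1.le _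
    have hθj1 : θ ^ j k ≤ 1 := pow_le_one₀ hθ.1.le hθ.2.le
    exact hCcv (hPC (z k)).1 (hxC k) hθj0 (by linarith) (by ring)
  -- bddBelow of f '' C
  have hbdd : ∀ y ∈ C, f xs ≤ f y := hxs
  have hInf_le : ∀ y ∈ C, sInf (f '' C) ≤ f y := by
    intro y hy
    exact csInf_le ⟨f xs, by rintro _ ⟨w, hw, rfl⟩; exact hbdd w hw⟩ ⟨y, hy, rfl⟩
  have hflev_le : ∀ k, flev k ≤ f ((θ ^ j k) • PC (z k) + (1 - θ ^ j k) • x k) := by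
    intro k
    cases k with
    | zero => exact le_of_eq hflev0
    | succ n => rw [hflevS n]; exact min_le_right _ _
  have hInf_flev : ∀ k, sInf (f '' C) ≤ flev k := by
    intro k
    induction k with
    | zero => rw [hflev0]; exact hInf_le _ (hyC 0)
    | succ n ih => rw [hflevS n]; exact le_min ih (hInf_le _ (hyC (n+1)))
  intro k hk
  refine ⟨?_, hInf_flev k⟩
  -- x k is not the projection of z k
  have hne : x k ≠ PC (z k) := by
    intro heq
    apply hk
    refine ⟨hxC k, fun w hw => ?_⟩
    have h1 := (hPC (z k)).2 w hw
    rw [← heq, hz k] at h1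
    have h2 : x k - β k • gradf (x k) - x k = -(β k • gradf (x k)) := by abel
    rw [h2, inner_neg_left, real_inner_smul_left] at h1
    have hβpos : 0 < β k := lt_of_lt_of_le hβlo (hβk k).1
    have h3 : 0 ≤ ⟪gradf (x k), w - x k⟫ := by
      by_contra h4
      push_neg at h4
      nlinarith
    have := grad_ineq_aux f hf gradf hgrad (x k) w
    linarith
  -- the descent inner product is positive
  have hβpos : 0 < β k := lt_of_lt_of_le hβlo (hβk k).1
  have hip : 0 < ⟪gradf (x k), x k - PC (z k)⟫ := by
    have h1 := (hPC (z k)).2 (x k) (hxC k)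
    set P := PC (z k) with hP
    rw [hz k] at h1
    have h2 : x k - β k • gradf (x k) - P
        = (x k - P) - β k • gradf (x k) := by abel
    rw [h2, inner_sub_left, real_inner_smul_left] at h1
    have h3 : ⟪x k - P, x k - P⟫ = ‖x k - P‖ ^ 2 :=
      real_inner_self_eq_norm_sq _
    have h4 : (0:ℝ) < ‖x k - P‖ ^ 2 := by
      have : x k - P ≠ 0 := sub_ne_zero.mpr hne
      exact pow_pos (norm_pos_iff.mpr this) 2
    nlinarith
  have hθjpos : (0:ℝ) < θ ^ j k := pow_pos hθ.1 _
  have := hjA k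
  have := hflev_le k
  nlinarith [mul_pos (mul_pos hδ.1 hθjpos) hip]
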